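/- Existence of a Hölder space-filling curve (Lemma B.2): For every integer d ≥ 1 there exists a surjective map ψ_d : [0,1] → [0,1]^d that is Hölder continuous of order 1/d with constant 2·sqrt(d+3), i.e., ‖ψ_d(s) − ψ_d(t)‖ ≤ 2·sqrt(d+3)·|s − t|^{1/d} for all s, t ∈ [0,1]. -/

import Mathlib

namespace SFC

abbrev V (d : ℕ) := Fin d → Bool

abbrev Cell (d : ℕ) := Fin d → ℕ

def adjC {d : ℕ} (p q : Cell d) : Prop :=
  ∃ i, (∀ j, j ≠ i → p j = q j) ∧ (p i = q i + 1 ∨ q i = p i + 1)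

lemma adjC_symm {d : ℕ} {p q : Cell d} (h : adjC p q) : adjC q p := by
  obtain ⟨i, h1, h2⟩ := h
  exact ⟨i, fun j hj => (h1 j hj).symm, h2.symm⟩

def wt {d : ℕ} (v : V d) : ℕ := ∑ i, if v i then 1 else 0

def adjB {d : ℕ} (u v : V d) : Prop := ∃ i, (∀ j, j ≠ i → u j = v j) ∧ u i ≠ v i

lemma wt_snoc {d : ℕ} (u : V d) (b : Bool) :
    wt (Fin.snoc u b) = wt u + (if b then 1 else 0) := by
  unfold wt
  rw [Fin.sum_univ_castSucc]
  simp

lemma adjB_snoc {d : ℕ} {u v : V d} (b : Bool) (h : adjB u v) :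
    adjB (Fin.snoc u b) (Fin.snoc v b) := by
  obtain ⟨i, h1, h2⟩ := h
  refine ⟨i.castSucc, fun j hj => ?_, by simpa using h2⟩
  induction j using Fin.lastCases with
  | last => simp
  | cast j =>
    have : j ≠ i := by rintro rfl; exact hj rfl
    simpa using h1 j this

lemma adjB_snoc_ne {d : ℕ} (u : V d) {a b : Bool} (h : a ≠ b) :
    adjB (Fin.snoc u a) (Fin.snoc u b) := by
  refine ⟨Fin.last d, fun j hj => ?_, by simpa using h⟩
  induction j using Fin.lastCases with
  | last => exact absurd rfl hj
  | cast j => simp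

lemma adjB_wt {d : ℕ} {u v : V d} (h : adjB u v) : wt u % 2 ≠ wt v % 2 := by
  obtain ⟨i, h1, h2⟩ := h
  unfold wt
  rw [← Finset.add_sum_erase _ _ (Finset.mem_univ i),
      ← Finset.add_sum_erase _ (fun j => if v j then 1 else 0) (Finset.mem_univ i)]
  have : ∑ j ∈ Finset.univ.erase i, (if u j then 1 else 0) =
      ∑ j ∈ Finset.univ.erase i, (if v j then 1 else 0) := by
    apply Finset.sum_congr rfl
    intro j hj
    rw [h1 j (Finset.ne_of_mem_erase hj)]
  rw [this]
  rcases Bool.eq_false_or_eq_true (u i) with h3 | h3 <;>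
    rcases Bool.eq_false_or_eq_true (v i) with h4 | h4 <;>
      simp [h3, h4] at h2 ⊢ <;> omega

def IsHam {d : ℕ} (u v : V d) (l : List (V d)) : Prop :=
  l.Chain' adjB ∧ l.head? = some u ∧ l.getLast? = some v ∧ l.Nodup ∧ ∀ w, w ∈ l

lemma snoc_injective {d : ℕ} (b : Bool) :
    Function.Injective (fun u : V d => (Fin.snoc u b : V (d + 1))) := by
  intro u v h
  funext j
  have := congrFun h j.castSucc
  simpa using this

lemma snoc_last_eq {d : ℕ} {u v : V d} {a b : Bool}
    (h : (Fin.snoc u a : V (d+1)) = Fin.snoc v b) : a = b := by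
  have := congrFun h (Fin.last d)
  simpa using this


lemma chain'_snoc_map {d : ℕ} (c : Bool) {l : List (V d)} (h : l.Chain' adjB) :
    (l.map (fun w => (Fin.snoc w c : V (d+1)))).Chain' adjB :=
  (List.isChain_map _).mpr (h.imp fun _ _ hh => adjB_snoc c hh)

lemma head?_append_eq {α : Type*} {l₁ l₂ : List α} {x : α} (h : l₁.head? = some x) :
    (l₁ ++ l₂).head? = some x := by rw [List.head?_append, h]; rfl

lemma getLast?_append_eq {α : Type*} {l₁ l₂ : List α} {x : α} (h : l₂.getLast? = some x) :
    (l₁ ++ l₂).getLast? = some x := by rw [List.getLast?_append, h]; rfl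

lemma mem_snoc_map {d : ℕ} {l : List (V d)} (w : V (d+1)) (c : Bool)
    (h1 : Fin.init w ∈ l) (h2 : w (Fin.last d) = c) :
    w ∈ l.map (fun w' => (Fin.snoc w' c : V (d+1))) := by
  rw [List.mem_map]
  exact ⟨Fin.init w, h1, by rw [← h2]; exact Fin.snoc_init_self w⟩

theorem havel : ∀ (d : ℕ) (u v : V d), wt u % 2 ≠ wt v % 2 → ∃ l, IsHam u v l := by
  intro d
  induction d with
  | zero =>
    intro u v h
    exact absurd (by unfold wt; simp) h
  | succ d IH =>
    intro u v h
    obtain ⟨u', a, rfl⟩ : ∃ u' a, u = Fin.snoc u' a :=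
      ⟨Fin.init u, u (Fin.last d), (Fin.snoc_init_self u).symm⟩
    obtain ⟨v', b, rfl⟩ : ∃ v' b, v = Fin.snoc v' b :=
      ⟨Fin.init v, v (Fin.last d), (Fin.snoc_init_self v).symm⟩
    rw [wt_snoc, wt_snoc] at h
    by_cases hab : a = b
    · -- same copy case
      subst hab
      have hpuv : wt u' % 2 ≠ wt v' % 2 := by
        intro he; apply h; omega
      have hd : 0 < d := by
        rcases Nat.eq_zero_or_pos d with rfl | h'
        · exact absurd (by unfold wt; simp) hpuv
        · exact h'
      obtain ⟨P, hPc, hPh, hPl, hPn, hPcov⟩ := IH u' v' hpuv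
      obtain ⟨tl, rfl⟩ : ∃ tl, P = u' :: tl := by
        cases P with
        | nil => simp at hPh
        | cons x tl =>
          rw [List.head?_cons, Option.some_inj] at hPh
          exact ⟨tl, by rw [hPh]⟩
      obtain ⟨p1, rest, rfl⟩ : ∃ p1 rest, tl = p1 :: rest := by
        cases tl with
        | nil =>
          exfalso
          simp at hPl
          exact hpuv (by rw [hPl])
        | cons p1 rest => exact ⟨p1, rest, rfl⟩
      have hadj01 : adjB u' p1 := (List.isChain_cons_cons.mp hPc).1
      obtain ⟨Q, hQc, hQh, hQl, hQn, hQcov⟩ := IH u' p1 (adjB_wt hadj01)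
      refine ⟨(Fin.snoc u' a : V (d+1)) ::
        (Q.map (fun w => (Fin.snoc w (!a) : V (d+1))) ++
         (p1 :: rest).map (fun w => (Fin.snoc w a : V (d+1)))), ?_, by simp, ?_, ?_, ?_⟩
      · -- Chain'
        unfold List.Chain'
        rw [List.isChain_cons]
        refine ⟨?_, ?_⟩
        · intro y hy
          rw [head?_append_eq (by rw [List.head?_map, hQh]; rfl)] at hy
          rw [Option.mem_def, Option.some_inj] at hy
          subst hy
          exact adjB_snoc_ne u' (by simp)
        · refine List.IsChain.append (chain'_snoc_map _ hQc) (chain'_snoc_map _ (List.isChain_cons_cons.mp hPc).2) ?_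
          intro x hx y hy
          rw [List.getLast?_map, hQl, Option.map_some] at hx
          rw [List.head?_map, List.head?_cons, Option.map_some] at hy
          rw [Option.mem_def, Option.some_inj] at hx hy
          subst hx; subst hy
          exact adjB_snoc_ne p1 (by simp)
      · -- getLast?
        have hB : ((p1 :: rest).map (fun w => (Fin.snoc w a : V (d+1)))).getLast?
            = some (Fin.snoc v' a) := by
          have h1 : (p1 :: rest).getLast? = some v' := by
            rw [← List.getLast?_cons_cons (a := u')]; exact hPl
          rw [List.getLast?_map, h1]; rfl
        show ([(Fin.snoc u' a : V (d+1))] ++ _).getLast? = _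
        exact getLast?_append_eq (getLast?_append_eq hB)
      · -- Nodup
        rw [List.nodup_cons]
        constructor
        · intro hmem
          rw [List.mem_append] at hmem
          rcases hmem with hm | hm
          · rw [List.mem_map] at hm
            obtain ⟨w, _, hw⟩ := hm
            exact (by simp : ¬ (!a) = a) (snoc_last_eq hw)
          · rw [List.mem_map] at hm
            obtain ⟨w, hw1, hw2⟩ := hm
            have : w = u' := by
              funext j
              have := congrFun hw2 j.castSucc
              simpa using this
            subst this
            exact (List.nodup_cons.mp hPn).1 hw1
        · refine List.Nodup.append (hQn.map (snoc_injective _)) ((List.nodup_cons.mp hPn).2.map (snoc_injective _)) ?_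
          rw [List.disjoint_left]
          intro x hx1 hx2
          rw [List.mem_map] at hx1 hx2
          obtain ⟨w1, _, hw1⟩ := hx1
          obtain ⟨w2, _, hw2⟩ := hx2
          have := snoc_last_eq (hw1.trans hw2.symm)
          simp at this
      · -- cover
        intro w
        rw [List.mem_cons]
        rcases Bool.eq_or_eq_not (w (Fin.last d)) a with hc | hc
        · have hwin : Fin.init w ∈ u' :: p1 :: rest := hPcov _
          rw [List.mem_cons] at hwin
          rcases hwin with hw | hw
          · left
            rw [← Fin.snoc_init_self w, hw, hc]
          · right
            rw [List.mem_append]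
            right
            exact mem_snoc_map w a hw hc
        · right
          rw [List.mem_append]
          left
          exact mem_snoc_map w (!a) (hQcov _) hc
    · -- different copies
      rcases Nat.eq_zero_or_pos d with rfl | hd
      · -- d = 0 : the two-point path
        have huv' : u' = v' := by funext j; exact j.elim0
        subst huv'
        refine ⟨[Fin.snoc u' a, Fin.snoc u' b], ?_, by simp, by simp, ?_, ?_⟩
        · unfold List.Chain'
          rw [List.isChain_cons_cons]
          exact ⟨adjB_snoc_ne u' hab, List.isChain_singleton _⟩
        · rw [List.nodup_cons]
          refine ⟨?_, List.nodup_singleton _⟩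
          rw [List.mem_singleton]
          intro hh
          exact hab (snoc_last_eq hh)
        · intro w
          have hwi : Fin.init w = u' := by funext j; exact j.elim0
          rcases Bool.eq_or_eq_not (w (Fin.last 0)) a with hc | hc
          · have : w = Fin.snoc u' a := by rw [← Fin.snoc_init_self w, hwi, hc]
            rw [this]; simp
          · have hb' : (!a) = b := by
              cases a <;> cases b <;> simp_all
            have : w = Fin.snoc u' b := by rw [← Fin.snoc_init_self w, hwi, hc, hb']
            rw [this]; simp
      · -- d ≥ 1
        have hpar : wt u' % 2 = wt v' % 2 := by
          cases a <;> cases b <;> simp at hab h <;> omega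
        set i0 : Fin d := ⟨0, hd⟩ with hi0
        set x' := Function.update u' i0 (!(u' i0)) with hx'
        have hadj : adjB u' x' := by
          refine ⟨i0, fun j hj => ?_, ?_⟩
          · rw [hx', Function.update_of_ne hj]
          · rw [hx', Function.update_self]
            simp
        obtain ⟨P1, h1c, h1h, h1l, h1n, h1cov⟩ := IH u' x' (adjB_wt hadj)
        obtain ⟨P2, h2c, h2h, h2l, h2n, h2cov⟩ := IH x' v'
          (by have := adjB_wt hadj; omega)
        refine ⟨P1.map (fun w => (Fin.snoc w a : V (d+1))) ++
                P2.map (fun w => (Fin.snoc w b : V (d+1))), ?_, ?_, ?_, ?_, ?_⟩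
        · refine List.IsChain.append (chain'_snoc_map _ h1c) (chain'_snoc_map _ h2c) ?_
          intro x hx y hy
          rw [List.getLast?_map, h1l, Option.map_some] at hx
          rw [List.head?_map, h2h, Option.map_some] at hy
          rw [Option.mem_def, Option.some_inj] at hx hy
          subst hx; subst hy
          exact adjB_snoc_ne x' hab
        · exact head?_append_eq (by rw [List.head?_map, h1h]; rfl)
        · exact getLast?_append_eq (by rw [List.getLast?_map, h2l]; rfl)
        · refine List.Nodup.append (h1n.map (snoc_injective _)) (h2n.map (snoc_injective _)) ?_
          rw [List.disjoint_left]
          intro x hx1 hx2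
          rw [List.mem_map] at hx1 hx2
          obtain ⟨w1, _, hw1⟩ := hx1
          obtain ⟨w2, _, hw2⟩ := hx2
          exact hab (snoc_last_eq (hw1.trans hw2.symm))
        · intro w
          rw [List.mem_append]
          rcases Bool.eq_or_eq_not (w (Fin.last d)) a with hc | hc
          · left; exact mem_snoc_map w a (h1cov _) hc
          · right
            have hb' : (!a) = b := by cases a <;> cases b <;> simp_all
            exact mem_snoc_map w b (h2cov _) (by rw [hc, hb'])


/-! ### Builder -/

open scoped Classical

def glob {d : ℕ} (p : Cell d) (v : V d) : Cell d := fun i => 2 * p i + (if v i then 1 else 0)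

def zc {d : ℕ} : Cell d := fun _ => 0

lemma glob_div2 {d : ℕ} (p : Cell d) (v : V d) (i : Fin d) : glob p v i / 2 = p i := by
  unfold glob
  rcases Bool.eq_false_or_eq_true (v i) with h | h <;> simp [h] <;> omega

lemma adjC_glob {d : ℕ} (p : Cell d) {u v : V d} (h : adjB u v) :
    adjC (glob p u) (glob p v) := by
  obtain ⟨i, h1, h2⟩ := h
  refine ⟨i, fun j hj => by unfold glob; rw [h1 j hj], ?_⟩
  unfold glob
  rcases Bool.eq_false_or_eq_true (u i) with h3 | h3 <;>
    rcases Bool.eq_false_or_eq_true (v i) with h4 | h4 <;> simp [h3, h4] at h2 ⊢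

lemma wt_update_add {d : ℕ} (u : V d) (i : Fin d) (c : Bool) :
    wt (Function.update u i c) + (if u i then 1 else 0) = wt u + (if c then 1 else 0) := by
  unfold wt
  rw [← Finset.add_sum_erase _ (fun j => if Function.update u i c j then 1 else 0) (Finset.mem_univ i),
      ← Finset.add_sum_erase _ (fun j => if u j then 1 else 0) (Finset.mem_univ i)]
  have hs : ∑ j ∈ Finset.univ.erase i, (if Function.update u i c j then 1 else 0) =
      ∑ j ∈ Finset.univ.erase i, (if u j then 1 else 0) := by
    apply Finset.sum_congr rfl
    intro j hj
    rw [Function.update_of_ne (Finset.ne_of_mem_erase hj)]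
  rw [hs, Function.update_self]
  omega

lemma parity_ex {d : ℕ} (hd2 : 2 ≤ d) (i : Fin d) (si : Bool) (σ : ℕ) :
    ∃ x : V d, x i = si ∧ wt x % 2 ≠ σ % 2 := by
  set x0 : V d := Function.update (fun _ => false) i si with hx0
  by_cases h : wt x0 % 2 ≠ σ % 2
  · exact ⟨x0, by rw [hx0, Function.update_self], h⟩
  · push_neg at h
    have hj : ∃ j : Fin d, j ≠ i := by
      by_cases h0 : (i : ℕ) = 0
      · exact ⟨⟨1, by omega⟩, by intro hh; rw [Fin.ext_iff] at hh; simp at hh; omega⟩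
      · exact ⟨⟨0, by omega⟩, by intro hh; rw [Fin.ext_iff] at hh; simp at hh; omega⟩
    obtain ⟨j, hj⟩ := hj
    refine ⟨Function.update x0 j true, ?_, ?_⟩
    · rw [Function.update_of_ne (fun hh => hj hh.symm), hx0, Function.update_self]
    · have h1 := wt_update_add x0 j true
      have h2 : x0 j = false := by rw [hx0, Function.update_of_ne hj]
      rw [h2] at h1
      norm_num at h1
      omega

lemma finC_ex {d : ℕ} (hd : 1 ≤ d) (e : V d) : ∃ x : V d, wt x % 2 ≠ wt e % 2 := by
  set i0 : Fin d := ⟨0, hd⟩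
  refine ⟨Function.update e i0 (!(e i0)), ?_⟩
  have : adjB e (Function.update e i0 (!(e i0))) := by
    refine ⟨i0, fun j hj => (Function.update_of_ne hj _ _).symm, ?_⟩
    rw [Function.update_self]
    simp
  exact (adjB_wt this).symm

lemma step_ex {d : ℕ} (hd2 : 2 ≤ d) (e : V d) {p q : Cell d} (h : adjC p q) :
    ∃ x y : V d, wt x % 2 ≠ wt e % 2 ∧ adjC (glob p x) (glob q y) := by
  obtain ⟨i, hj, hpq⟩ := h
  rcases hpq with hc | hc
  · -- p i = q i + 1 : exit on the low side, x i = false, y = update x i true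
    obtain ⟨x, hx1, hx2⟩ := parity_ex hd2 i false (wt e)
    refine ⟨x, Function.update x i true, hx2, i, fun j hjne => ?_, ?_⟩
    · simp only [glob]
      rw [hj j hjne, Function.update_of_ne hjne]
    · left
      simp only [glob]
      rw [hx1, Function.update_self]
      norm_num
      omega
  · -- q i = p i + 1 : x i = true, y = update x i false
    obtain ⟨x, hx1, hx2⟩ := parity_ex hd2 i true (wt e)
    refine ⟨x, Function.update x i false, hx2, i, fun j hjne => ?_, ?_⟩
    · simp only [glob]
      rw [hj j hjne, Function.update_of_ne hjne]
    · right
      simp only [glob]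
      rw [hx1, Function.update_self]
      norm_num
      omega

noncomputable def hp {d : ℕ} (e x : V d) : List (V d) :=
  if h : ∃ l, IsHam e x l then h.choose else [e]

lemma hp_spec {d : ℕ} {e x : V d} (h : wt x % 2 ≠ wt e % 2) : IsHam e x (hp e x) := by
  unfold hp
  rw [dif_pos (havel d e x h.symm)]
  exact (havel d e x h.symm).choose_spec

lemma hp_length {d : ℕ} {e x : V d} (h : wt x % 2 ≠ wt e % 2) : (hp e x).length = 2 ^ d := by
  obtain ⟨-, -, -, hn, hcov⟩ := hp_spec h
  have h1 : (hp e x).toFinset = Finset.univ := Finset.eq_univ_iff_forall.mpr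
    (fun w => List.mem_toFinset.mpr (hcov w))
  have h2 := List.toFinset_card_of_nodup hn
  rw [h1] at h2
  rw [← h2, Finset.card_univ]
  simp [Fintype.card_fun]

noncomputable def stepC {d : ℕ} (e : V d) (p q : Cell d) : V d × V d :=
  if h : ∃ x y : V d, wt x % 2 ≠ wt e % 2 ∧ adjC (glob p x) (glob q y)
  then (h.choose, h.choose_spec.choose) else (e, e)

lemma stepC_spec {d : ℕ} (hd2 : 2 ≤ d) (e : V d) {p q : Cell d} (h : adjC p q) :
    wt (stepC e p q).1 % 2 ≠ wt e % 2 ∧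
      adjC (glob p (stepC e p q).1) (glob q (stepC e p q).2) := by
  unfold stepC
  rw [dif_pos (step_ex hd2 e h)]
  exact (step_ex hd2 e h).choose_spec.choose_spec

noncomputable def finC {d : ℕ} (e : V d) : V d :=
  if h : ∃ x : V d, wt x % 2 ≠ wt e % 2 then h.choose else e

lemma finC_spec {d : ℕ} (hd : 1 ≤ d) (e : V d) : wt (finC e) % 2 ≠ wt e % 2 := by
  unfold finC
  rw [dif_pos (finC_ex hd e)]
  exact (finC_ex hd e).choose_spec

noncomputable def build {d : ℕ} : List (Cell d) → V d → List (Cell d)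
  | [], _ => []
  | [p], e => (hp e (finC e)).map (glob p)
  | p :: q :: r, e => (hp e (stepC e p q).1).map (glob p) ++ build (q :: r) (stepC e p q).2


lemma build_spec {d : ℕ} (hd2 : 2 ≤ d) (l : List (Cell d)) :
    ∀ (e : V d), l ≠ [] → l.Chain' adjC →
      ((build l e).length = 2 ^ d * l.length) ∧
      (build l e).Chain' adjC ∧
      ((build l e).head? = l.head?.map (fun p => glob p e)) ∧
      (∀ p ∈ l, ∀ v : V d, glob p v ∈ build l e) ∧
      (∀ c ∈ build l e, ∃ p ∈ l, ∃ v : V d, c = glob p v) ∧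
      (∀ m, m < 2 ^ d * l.length → ∀ i,
        ((build l e).getD m zc) i / 2 = (l.getD (m / 2 ^ d) zc) i) := by
  induction l with
  | nil => intro e h _; exact absurd rfl h
  | cons p tl IH =>
    intro e _ hchain
    cases tl with
    | nil =>
      -- singleton
      have hfin := finC_spec (by omega : 1 ≤ d) e
      obtain ⟨hc, hh, hl, hn, hcov⟩ := hp_spec hfin
      have hlen := hp_length hfin
      have hblen : (build [p] e).length = 2 ^ d := by
        show ((hp e (finC e)).map (glob p)).length = 2 ^ d
        rw [List.length_map, hlen]
      refine ⟨by rw [hblen]; simp, ?_, ?_, ?_, ?_, ?_⟩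
      · show ((hp e (finC e)).map (glob p)).Chain' adjC
        unfold List.Chain'
        rw [List.isChain_map]
        exact hc.imp fun _ _ hh => adjC_glob p hh
      · show ((hp e (finC e)).map (glob p)).head? = _
        rw [List.head?_map, hh]
        rfl
      · intro p' hp' v
        rw [List.mem_singleton] at hp'
        subst hp'
        exact List.mem_map.mpr ⟨v, hcov v, rfl⟩
      · intro c hcmem
        obtain ⟨w, _, hw⟩ := List.mem_map.mp hcmem
        exact ⟨p, List.mem_singleton_self p, w, hw.symm⟩
      · intro m hm i
        have hid : m / 2 ^ d = 0 := Nat.div_eq_of_lt (by simpa using hm)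
        rw [hid, List.getD_cons_zero]
        have hm' : m < ((hp e (finC e)).map (glob p)).length := by
          rw [List.length_map, hlen]; simpa using hm
        show ((hp e (finC e)).map (glob p)).getD m zc i / 2 = _
        rw [List.getD_eq_getElem _ _ hm', List.getElem_map, glob_div2]
    | cons q r =>
      have hadj : adjC p q := (List.isChain_cons_cons.mp hchain).1
      have hchain' : (q :: r).Chain' adjC := (List.isChain_cons_cons.mp hchain).2
      obtain ⟨hpar, hadjg⟩ := stepC_spec hd2 e hadj
      obtain ⟨hc, hh, hl, hn, hcov⟩ := hp_spec hpar
      have hlen := hp_length hpar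
      obtain ⟨ih1, ih2, ih3, ih4, ih5, ih6⟩ :=
        IH (stepC e p q).2 (List.cons_ne_nil q r) hchain'
      have hbeq : build (p :: q :: r) e =
          (hp e (stepC e p q).1).map (glob p) ++ build (q :: r) (stepC e p q).2 := rfl
      have hblen : ((hp e (stepC e p q).1).map (glob p)).length = 2 ^ d := by
        rw [List.length_map, hlen]
      have hresth : (build (q :: r) (stepC e p q).2).head? = some (glob q (stepC e p q).2) := by
        rw [ih3]; rfl
      refine ⟨?_, ?_, ?_, ?_, ?_, ?_⟩
      · rw [hbeq, List.length_append, hblen, ih1]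
        simp only [List.length_cons]
        ring
      · rw [hbeq]
        refine List.IsChain.append ?_ ih2 ?_
        · rw [List.isChain_map]
          exact hc.imp fun _ _ hh => adjC_glob p hh
        · intro x hx y hy
          rw [List.getLast?_map, hl, Option.map_some] at hx
          rw [hresth] at hy
          rw [Option.mem_def, Option.some_inj] at hx hy
          subst hx; subst hy
          exact hadjg
      · rw [hbeq]
        rw [head?_append_eq (by rw [List.head?_map, hh]; rfl)]
        rfl
      · intro p' hp' v
        rw [hbeq, List.mem_append]
        rw [List.mem_cons] at hp'
        rcases hp' with rfl | hp'
        · left; exact List.mem_map.mpr ⟨v, hcov v, rfl⟩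
        · right; exact ih4 p' hp' v
      · intro c hcmem
        rw [hbeq, List.mem_append] at hcmem
        rcases hcmem with hm | hm
        · obtain ⟨w, _, hw⟩ := List.mem_map.mp hm
          exact ⟨p, List.mem_cons_self, w, hw.symm⟩
        · obtain ⟨p', hp', w, hw⟩ := ih5 c hm
          exact ⟨p', List.mem_cons_of_mem p hp', w, hw⟩
      · intro m hm i
        rw [hbeq]
        by_cases hcase : m < 2 ^ d
        · rw [List.getD_append _ _ _ _ (by rw [hblen]; exact hcase)]
          rw [Nat.div_eq_of_lt hcase, List.getD_cons_zero]
          have hm' : m < ((hp e (stepC e p q).1).map (glob p)).length := by rw [hblen]; exact hcase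
          rw [List.getD_eq_getElem _ _ hm', List.getElem_map, glob_div2]
        · push_neg at hcase
          rw [List.getD_append_right _ _ _ _ (by rw [hblen]; exact hcase)]
          rw [hblen]
          have hmlt : m - 2 ^ d < 2 ^ d * (q :: r).length := by
            have : m < 2 ^ d * (q :: r).length + 2 ^ d := by
              rw [List.length_cons] at hm
              calc m < 2 ^ d * ((q :: r).length + 1) := hm
              _ = 2 ^ d * (q :: r).length + 2 ^ d := by ring
            omega
          rw [ih6 (m - 2 ^ d) hmlt i]
          have hdiv : m / 2 ^ d = (m - 2 ^ d) / 2 ^ d + 1 := by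
            have h2 : 0 < 2 ^ d := Nat.pow_pos (by norm_num)
            rcases Nat.exists_eq_add_of_le hcase with ⟨k, rfl⟩
            rw [Nat.add_sub_cancel_left, Nat.add_div_left _ h2]
          rw [hdiv, List.getD_cons_succ]

/-! ### The levels -/

noncomputable def lev {d : ℕ} : ℕ → List (Cell d)
  | 0 => [zc]
  | n + 1 => build (lev n) (fun _ => false)

lemma lev_spec {d : ℕ} (hd2 : 2 ≤ d) (n : ℕ) :
    ((lev n : List (Cell d)).length = 2 ^ (d * n)) ∧
    (lev n : List (Cell d)).Chain' adjC ∧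
    (∀ c ∈ (lev n : List (Cell d)), ∀ i, c i < 2 ^ n) ∧
    (∀ c : Cell d, (∀ i, c i < 2 ^ n) → c ∈ (lev n : List (Cell d))) := by
  induction n with
  | zero =>
    refine ⟨by simp [lev], by simp [lev, List.Chain'], ?_, ?_⟩
    · intro c hc i
      rw [lev, List.mem_singleton] at hc
      subst hc
      simp [zc]
    · intro c hc
      rw [lev, List.mem_singleton]
      funext i
      have := hc i
      simp at this
      simp [zc, this]
  | succ n IH =>
    obtain ⟨ih1, ih2, ih3, ih4⟩ := IH
    have hne : (lev n : List (Cell d)) ≠ [] := by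
      intro hh
      rw [hh] at ih1
      simp at ih1
      have : (0:ℕ) < 2 ^ (d * n) := Nat.pow_pos (by norm_num)
      omega
    obtain ⟨b1, b2, b3, b4, b5, b6⟩ := build_spec hd2 (lev n) (fun _ => false) hne ih2
    refine ⟨?_, b2, ?_, ?_⟩
    · show (build (lev n) (fun _ => false)).length = _
      rw [b1, ih1, ← pow_add]
      congr 1
      ring
    · intro c hc i
      obtain ⟨p, hpmem, v, rfl⟩ := b5 c hc
      have hb := ih3 p hpmem i
      unfold glob
      rw [pow_succ]
      rcases Bool.eq_false_or_eq_true (v i) with h | h <;> simp [h] <;> omega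
    · intro c hc
      set p : Cell d := fun i => c i / 2 with hp
      set v : V d := fun i => decide (c i % 2 = 1) with hv
      have hpm : p ∈ (lev n : List (Cell d)) := by
        apply ih4
        intro i
        have := hc i
        rw [hp]
        simp only
        rw [pow_succ] at this
        omega
      have : c = glob p v := by
        funext i
        unfold glob
        rw [hp, hv]
        simp only [decide_eq_true_eq]
        by_cases hmod : c i % 2 = 1
        · simp [hmod]
          omega
        · simp [hmod]
          omega
      rw [this]
      exact b4 p hpm v


/-! ### Analysis -/

noncomputable def idx (d n : ℕ) (t : ℝ) : ℕ := min ⌊(2:ℝ) ^ (d * n) * t⌋₊ (2 ^ (d * n) - 1)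

lemma idx_lt (d n : ℕ) (t : ℝ) : idx d n t < 2 ^ (d * n) :=
  lt_of_le_of_lt (min_le_right _ _)
    (Nat.sub_lt (Nat.pow_pos (by norm_num)) one_pos)

lemma pow_sub_one_div (d n : ℕ) : (2 ^ (d * (n + 1)) - 1) / 2 ^ d = 2 ^ (d * n) - 1 := by
  have hM : 1 ≤ 2 ^ (d * n) := Nat.one_le_two_pow
  have hK : 1 ≤ 2 ^ d := Nat.one_le_two_pow
  have hsplit : 2 ^ (d * (n + 1)) - 1 = (2 ^ d - 1) + (2 ^ (d * n) - 1) * 2 ^ d := by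
    have hmul : 2 ^ (d * (n + 1)) = 2 ^ (d * n) * 2 ^ d := by
      rw [← pow_add]; congr 1 <;> ring
    rcases Nat.exists_eq_add_of_le hM with ⟨m, hm⟩
    rw [hmul, hm, add_mul, one_mul]
    have h1 : 1 + m - 1 = m := by omega
    rw [h1]
    generalize m * 2 ^ d = P
    omega
  rw [hsplit, Nat.add_mul_div_right _ _ (Nat.pow_pos (by norm_num)),
    Nat.div_eq_of_lt (by omega), Nat.zero_add]

lemma nat_min_div (a b c : ℕ) : min a b / c = min (a / c) (b / c) := by
  rcases le_total a b with h | h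
  · rw [min_eq_left h, min_eq_left (Nat.div_le_div_right h)]
  · rw [min_eq_right h, min_eq_right (Nat.div_le_div_right h)]

lemma idx_div (d n : ℕ) (t : ℝ) : idx d (n + 1) t / 2 ^ d = idx d n t := by
  unfold idx
  rw [nat_min_div, pow_sub_one_div]
  congr 1
  rw [← Nat.floor_div_natCast]
  congr 1
  push_cast
  have : (2:ℝ) ^ (d * (n + 1)) = 2 ^ (d * n) * 2 ^ d := by
    rw [← pow_add]; congr 1 <;> ring
  rw [this]
  field_simp

section Fixedd

variable {d : ℕ}

noncomputable def cel (d n : ℕ) (t : ℝ) : Cell d := (lev n).getD (idx d n t) zc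

lemma cel_mem (hd2 : 2 ≤ d) (n : ℕ) (t : ℝ) : cel d n t ∈ (lev n : List (Cell d)) := by
  unfold cel
  have hl : idx d n t < (lev n : List (Cell d)).length := by
    rw [(lev_spec hd2 n).1]; exact idx_lt d n t
  rw [List.getD_eq_getElem _ _ hl]
  exact List.getElem_mem hl

lemma cel_lt (hd2 : 2 ≤ d) (n : ℕ) (t : ℝ) (i : Fin d) : cel d n t i < 2 ^ n :=
  (lev_spec hd2 n).2.2.1 _ (cel_mem hd2 n t) i

lemma cel_div (hd2 : 2 ≤ d) (n : ℕ) (t : ℝ) (i : Fin d) :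
    cel d (n + 1) t i / 2 = cel d n t i := by
  obtain ⟨ih1, ih2, ih3, ih4⟩ := lev_spec hd2 n
  have hne : (lev n : List (Cell d)) ≠ [] := by
    intro hh
    rw [hh] at ih1
    simp at ih1
    have : (0:ℕ) < 2 ^ (d * n) := Nat.pow_pos (by norm_num)
    omega
  have b6 := (build_spec hd2 (lev n) (fun _ => false) hne ih2).2.2.2.2.2
  have hm : idx d (n + 1) t < 2 ^ d * (lev n : List (Cell d)).length := by
    rw [ih1, ← pow_add]
    have : d + d * n = d * (n + 1) := by ring
    rw [this]
    exact idx_lt d (n + 1) t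
  have := b6 (idx d (n + 1) t) hm i
  unfold cel
  show (build (lev n) (fun _ => false)).getD (idx d (n+1) t) zc i / 2 = _
  rw [this, idx_div]

noncomputable def apx (d n : ℕ) (t : ℝ) (i : Fin d) : ℝ := (cel d n t i : ℝ) / 2 ^ n

lemma apx_nonneg (d n : ℕ) (t : ℝ) (i : Fin d) : 0 ≤ apx d n t i := by
  unfold apx
  positivity

lemma apx_le_one (hd2 : 2 ≤ d) (n : ℕ) (t : ℝ) (i : Fin d) : apx d n t i ≤ 1 := by
  unfold apx
  rw [div_le_one (by positivity)]
  have := cel_lt hd2 n t i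
  calc ((cel d n t i : ℕ) : ℝ) ≤ ((2 ^ n : ℕ) : ℝ) := by exact_mod_cast this.le
  _ = 2 ^ n := by push_cast; ring

lemma apx_succ (hd2 : 2 ≤ d) (n : ℕ) (t : ℝ) (i : Fin d) :
    apx d n t i ≤ apx d (n + 1) t i ∧
      apx d (n + 1) t i ≤ apx d n t i + ((2:ℝ) ^ (n + 1))⁻¹ := by
  have hdiv := cel_div hd2 n t i
  have hnat : 2 * cel d n t i ≤ cel d (n + 1) t i ∧
      cel d (n + 1) t i ≤ 2 * cel d n t i + 1 := by omega
  have h1 : apx d n t i = (2 * (cel d n t i : ℝ)) / 2 ^ (n + 1) := by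
    unfold apx
    rw [pow_succ]
    field_simp
  have h2 : apx d n t i + ((2:ℝ) ^ (n + 1))⁻¹ = (2 * (cel d n t i : ℝ) + 1) / 2 ^ (n + 1) := by
    rw [h1]
    field_simp
  constructor
  · rw [h1]
    unfold apx
    gcongr
    exact_mod_cast hnat.1
  · rw [h2]
    unfold apx
    gcongr
    exact_mod_cast hnat.2

lemma apx_mono (hd2 : 2 ≤ d) (t : ℝ) (i : Fin d) : Monotone (fun n => apx d n t i) :=
  monotone_nat_of_le_succ (fun n => (apx_succ hd2 n t i).1)

lemma apx_add (hd2 : 2 ≤ d) (t : ℝ) (i : Fin d) (n k : ℕ) :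
    apx d (n + k) t i ≤ apx d n t i + ((2:ℝ) ^ n)⁻¹ - ((2:ℝ) ^ (n + k))⁻¹ := by
  induction k with
  | zero => simp
  | succ k IH =>
    have h1 := (apx_succ hd2 (n + k) t i).2
    have h2 : ((2:ℝ) ^ (n + k))⁻¹ = 2 * ((2:ℝ) ^ (n + k + 1))⁻¹ := by
      rw [pow_succ]
      field_simp
    have : n + (k + 1) = (n + k) + 1 := by ring
    rw [this]
    calc apx d ((n + k) + 1) t i ≤ apx d (n + k) t i + ((2:ℝ) ^ (n + k + 1))⁻¹ := h1
    _ ≤ (apx d n t i + ((2:ℝ) ^ n)⁻¹ - ((2:ℝ) ^ (n + k))⁻¹) + ((2:ℝ) ^ (n + k + 1))⁻¹ := by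
        linarith
    _ = apx d n t i + ((2:ℝ) ^ n)⁻¹ - ((2:ℝ) ^ ((n + k) + 1))⁻¹ := by
        rw [h2]; ring

noncomputable def psi (d : ℕ) (t : ℝ) (i : Fin d) : ℝ := ⨆ n, apx d n t i

lemma psi_bdd (hd2 : 2 ≤ d) (t : ℝ) (i : Fin d) :
    BddAbove (Set.range (fun n => apx d n t i)) := by
  refine ⟨1, ?_⟩
  rintro x ⟨m, rfl⟩
  exact apx_le_one hd2 m t i

lemma psi_ge (hd2 : 2 ≤ d) (n : ℕ) (t : ℝ) (i : Fin d) : apx d n t i ≤ psi d t i :=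
  le_ciSup (psi_bdd hd2 t i) n

lemma psi_le (hd2 : 2 ≤ d) (n : ℕ) (t : ℝ) (i : Fin d) :
    psi d t i ≤ apx d n t i + ((2:ℝ) ^ n)⁻¹ := by
  apply ciSup_le
  intro m
  rcases le_total m n with h | h
  · have := apx_mono hd2 t i h
    have hpos : (0:ℝ) ≤ ((2:ℝ) ^ n)⁻¹ := by positivity
    simp only at this
    linarith
  · obtain ⟨k, rfl⟩ := Nat.exists_eq_add_of_le h
    have := apx_add hd2 t i n k
    have hpos : (0:ℝ) ≤ ((2:ℝ) ^ (n + k))⁻¹ := by positivity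
    linarith

lemma interval_abs {x y u v h : ℝ} (hx1 : u ≤ x) (hx2 : x ≤ u + h)
    (hy1 : v ≤ y) (hy2 : y ≤ v + h) : |x - y| ≤ |u - v| + h := by
  rw [abs_le]
  have h1 := le_abs_self (u - v)
  have h2 := neg_abs_le (u - v)
  constructor <;> linarith

lemma idx_close (d n : ℕ) {s t : ℝ} (hs : s ∈ Set.Icc (0:ℝ) 1) (ht : t ∈ Set.Icc (0:ℝ) 1)
    (h : |s - t| ≤ ((2:ℝ) ^ (d * n))⁻¹) :
    idx d n s ≤ idx d n t + 1 ∧ idx d n t ≤ idx d n s + 1 := by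
  have key : ∀ x y : ℝ, 0 ≤ y → |x - y| ≤ ((2:ℝ) ^ (d * n))⁻¹ →
      ⌊(2:ℝ) ^ (d * n) * x⌋₊ ≤ ⌊(2:ℝ) ^ (d * n) * y⌋₊ + 1 := by
    intro x y hy hxy
    have hpow : (0:ℝ) < 2 ^ (d * n) := by positivity
    have hle : (2:ℝ) ^ (d * n) * x ≤ (2:ℝ) ^ (d * n) * y + 1 := by
      rw [abs_le] at hxy
      have : x ≤ y + ((2:ℝ) ^ (d * n))⁻¹ := by linarith [hxy.2]
      calc (2:ℝ) ^ (d * n) * x ≤ (2:ℝ) ^ (d * n) * (y + ((2:ℝ) ^ (d * n))⁻¹) := by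
            apply mul_le_mul_of_nonneg_left this hpow.le
      _ = (2:ℝ) ^ (d * n) * y + 1 := by field_simp
    calc ⌊(2:ℝ) ^ (d * n) * x⌋₊ ≤ ⌊(2:ℝ) ^ (d * n) * y + 1⌋₊ := by
          apply Nat.floor_le_floor hle
    _ = ⌊(2:ℝ) ^ (d * n) * y⌋₊ + 1 := by
          rw [Nat.floor_add_one (by positivity)]
  have h1 := key s t ht.1 h
  have h2 := key t s hs.1 (by rw [abs_sub_comm]; exact h)
  unfold idx
  omega

lemma chain_get_adj (hd2 : 2 ≤ d) (n : ℕ) {a b : ℕ} (ha : a < 2 ^ (d * n))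
    (hb : b < 2 ^ (d * n)) (hab : b = a + 1) :
    adjC ((lev n : List (Cell d)).getD a zc) ((lev n : List (Cell d)).getD b zc) := by
  subst hab
  have hlen : (lev n : List (Cell d)).length = 2 ^ (d * n) := (lev_spec hd2 n).1
  have ha' : a < (lev n : List (Cell d)).length := by omega
  have hb' : a + 1 < (lev n : List (Cell d)).length := by omega
  rw [List.getD_eq_getElem _ _ ha', List.getD_eq_getElem _ _ hb']
  have hchain := (lev_spec hd2 n).2.1
  unfold List.Chain' at hchain
  rw [List.isChain_iff_getElem] at hchain
  have := hchain a (by omega)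
  exact this

/-- key adjacency lemma -/
lemma key_adj (hd2 : 2 ≤ d) {s t : ℝ} (hs : s ∈ Set.Icc (0:ℝ) 1) (ht : t ∈ Set.Icc (0:ℝ) 1)
    (n : ℕ) (h : |s - t| ≤ ((2:ℝ) ^ (d * n))⁻¹) :
    ∃ i0 : Fin d, (∀ j, j ≠ i0 → |psi d s j - psi d t j| ≤ ((2:ℝ) ^ n)⁻¹) ∧
      |psi d s i0 - psi d t i0| ≤ 2 * ((2:ℝ) ^ n)⁻¹ := by
  have hclose := idx_close d n hs ht h
  have hcoord : ∀ (i : Fin d) (k : ℕ),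
      ((cel d n s i : ℝ) - (cel d n t i : ℝ)) = k → False ∨ True := fun _ _ _ => Or.inr trivial
  -- basic interval bounds for psi
  have hint : ∀ (u : ℝ) (i : Fin d), (cel d n u i : ℝ) / 2 ^ n ≤ psi d u i ∧
      psi d u i ≤ (cel d n u i : ℝ) / 2 ^ n + ((2:ℝ) ^ n)⁻¹ := by
    intro u i
    exact ⟨psi_ge hd2 n u i, psi_le hd2 n u i⟩
  have hbound : ∀ (i : Fin d) (c : ℝ), |(cel d n s i : ℝ) / 2 ^ n - (cel d n t i : ℝ) / 2 ^ n| ≤ c →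
      |psi d s i - psi d t i| ≤ c + ((2:ℝ) ^ n)⁻¹ := by
    intro i c hc
    have h1 := hint s i
    have h2 := hint t i
    have := interval_abs h1.1 h1.2 h2.1 h2.2
    linarith
  -- case analysis
  rcases Nat.lt_trichotomy (idx d n s) (idx d n t) with hlt | heq | hgt
  · -- idx t = idx s + 1, adjacent
    have hst : idx d n t = idx d n s + 1 := by omega
    have hadj : adjC (cel d n s) (cel d n t) := by
      unfold cel
      exact chain_get_adj hd2 n (idx_lt d n s) (idx_lt d n t) hst
    obtain ⟨i0, hj, hi⟩ := hadj
    refine ⟨i0, fun j hjne => ?_, ?_⟩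
    · have := hbound j 0 (by rw [hj j hjne]; simp)
      simpa using this
    · have habs : |(cel d n s i0 : ℝ) / 2 ^ n - (cel d n t i0 : ℝ) / 2 ^ n| ≤ ((2:ℝ) ^ n)⁻¹ := by
        have hd1 : ((cel d n s i0 : ℝ) - (cel d n t i0 : ℝ)) = 1 ∨
            ((cel d n t i0 : ℝ) - (cel d n s i0 : ℝ)) = 1 := by
          rcases hi with h' | h'
          · left; rw [h']; push_cast; ring
          · right; rw [h']; push_cast; ring
        have : |(cel d n s i0 : ℝ) - (cel d n t i0 : ℝ)| = 1 := by
          rcases hd1 with h' | h'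
          · rw [abs_of_nonneg (by linarith), h']
          · rw [abs_of_nonpos (by linarith)]; linarith
        rw [div_sub_div_same, abs_div, this, abs_of_nonneg (by positivity : (0:ℝ) ≤ (2:ℝ)^n)]
        rw [one_div]
      have := hbound i0 _ habs
      linarith
  · -- equal cells
    refine ⟨⟨0, by omega⟩, fun j _ => ?_, ?_⟩
    · have heqc : cel d n s = cel d n t := by unfold cel; rw [heq]
      have := hbound j 0 (by rw [heqc]; simp)
      simpa using this
    · have heqc : cel d n s = cel d n t := by unfold cel; rw [heq]
      have := hbound ⟨0, by omega⟩ 0 (by rw [heqc]; simp)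
      have hpos : (0:ℝ) ≤ ((2:ℝ) ^ n)⁻¹ := by positivity
      linarith
  · -- idx s = idx t + 1
    have hst : idx d n s = idx d n t + 1 := by omega
    have hadj : adjC (cel d n t) (cel d n s) := by
      unfold cel
      exact chain_get_adj hd2 n (idx_lt d n t) (idx_lt d n s) hst
    obtain ⟨i0, hj, hi⟩ := hadj
    refine ⟨i0, fun j hjne => ?_, ?_⟩
    · have := hbound j 0 (by rw [(hj j hjne)]; simp)
      simpa using this
    · have habs : |(cel d n s i0 : ℝ) / 2 ^ n - (cel d n t i0 : ℝ) / 2 ^ n| ≤ ((2:ℝ) ^ n)⁻¹ := by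
        have hd1 : ((cel d n t i0 : ℝ) - (cel d n s i0 : ℝ)) = 1 ∨
            ((cel d n s i0 : ℝ) - (cel d n t i0 : ℝ)) = 1 := by
          rcases hi with h' | h'
          · left; rw [h']; push_cast; ring
          · right; rw [h']; push_cast; ring
        have : |(cel d n s i0 : ℝ) - (cel d n t i0 : ℝ)| = 1 := by
          rcases hd1 with h' | h'
          · rw [abs_of_nonpos (by linarith)]; linarith
          · rw [abs_of_nonneg (by linarith), h']
        rw [div_sub_div_same, abs_div, this, abs_of_nonneg (by positivity : (0:ℝ) ≤ (2:ℝ)^n)]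
        rw [one_div]
      have := hbound i0 _ habs
      linarith

noncomputable def psiE (d : ℕ) (t : ℝ) : EuclideanSpace ℝ (Fin d) := WithLp.toLp 2 (fun i => psi d t i)

lemma key_norm (hd2 : 2 ≤ d) {s t : ℝ} (hs : s ∈ Set.Icc (0:ℝ) 1) (ht : t ∈ Set.Icc (0:ℝ) 1)
    (n : ℕ) (h : |s - t| ≤ ((2:ℝ) ^ (d * n))⁻¹) :
    ‖psiE d s - psiE d t‖ ≤ Real.sqrt ((d:ℝ) + 3) * ((2:ℝ) ^ n)⁻¹ := by
  obtain ⟨i0, hj, hi⟩ := key_adj hd2 hs ht n h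
  set c : ℝ := ((2:ℝ) ^ n)⁻¹ with hc
  have hc0 : 0 ≤ c := by positivity
  have hd1 : 1 ≤ d := by omega
  rw [EuclideanSpace.norm_eq]
  have hsum : ∑ i, ‖(psiE d s - psiE d t) i‖ ^ 2 ≤ ((d:ℝ) + 3) * c ^ 2 := by
    have hterm : ∀ i : Fin d, ‖(psiE d s - psiE d t) i‖ ^ 2 ≤
        if i = i0 then (2 * c) ^ 2 else c ^ 2 := by
      intro i
      have happ : (psiE d s - psiE d t) i = psi d s i - psi d t i := by
        rw [PiLp.sub_apply]; rfl
      rw [happ, Real.norm_eq_abs]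
      by_cases hii : i = i0
      · subst hii
        rw [if_pos rfl]
        exact pow_le_pow_left₀ (abs_nonneg _) hi 2
      · rw [if_neg hii]
        exact pow_le_pow_left₀ (abs_nonneg _) (hj i hii) 2
    calc ∑ i, ‖(psiE d s - psiE d t) i‖ ^ 2
        ≤ ∑ i, (if i = i0 then (2 * c) ^ 2 else c ^ 2) :=
          Finset.sum_le_sum (fun i _ => hterm i)
    _ = (2 * c) ^ 2 + ∑ i ∈ Finset.univ.erase i0, (if i = i0 then (2 * c) ^ 2 else c ^ 2) := by
          rw [← Finset.add_sum_erase _ _ (Finset.mem_univ i0), if_pos rfl]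
    _ = (2 * c) ^ 2 + ((d:ℝ) - 1) * c ^ 2 := by
          congr 1
          have : ∀ i ∈ Finset.univ.erase i0,
              (if i = i0 then (2 * c) ^ 2 else c ^ 2) = c ^ 2 := by
            intro i hi'
            rw [if_neg (Finset.ne_of_mem_erase hi')]
          rw [Finset.sum_congr rfl this, Finset.sum_const,
            Finset.card_erase_of_mem (Finset.mem_univ i0), Finset.card_univ, Fintype.card_fin]
          rw [nsmul_eq_mul, Nat.cast_sub hd1]
          norm_num
    _ ≤ ((d:ℝ) + 3) * c ^ 2 := by ring_nf; nlinarith [sq_nonneg c]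
  calc Real.sqrt (∑ i, ‖(psiE d s - psiE d t) i‖ ^ 2)
      ≤ Real.sqrt (((d:ℝ) + 3) * c ^ 2) := Real.sqrt_le_sqrt hsum
  _ = Real.sqrt ((d:ℝ) + 3) * c := by
      rw [Real.sqrt_mul (by positivity), Real.sqrt_sq hc0]

lemma pow_rpow_inv (d m : ℕ) (hd1 : 1 ≤ d) :
    (((2:ℝ) ^ (d * m))⁻¹) ^ ((1:ℝ) / d) = ((2:ℝ) ^ m)⁻¹ := by
  have h2 : (0:ℝ) ≤ 2 := by norm_num
  have hd0 : (d:ℝ) ≠ 0 := by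
    simp only [ne_eq, Nat.cast_eq_zero]
    omega
  have h1 : ((2:ℝ) ^ (d * m))⁻¹ = (2:ℝ) ^ (-(((d * m : ℕ)) : ℝ)) := by
    rw [Real.rpow_neg h2, Real.rpow_natCast]
  rw [h1, ← Real.rpow_mul h2]
  have h3 : (-(((d * m : ℕ)) : ℝ)) * (1 / d) = -(((m : ℕ)) : ℝ) := by
    push_cast
    field_simp
  rw [h3, Real.rpow_neg h2, Real.rpow_natCast]

lemma cel_zero (d : ℕ) (t : ℝ) : cel d 0 t = zc := by
  have h0 : idx d 0 t = 0 := by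
    unfold idx
    simp
  unfold cel
  rw [h0]
  show ([zc] : List (Cell d)).getD 0 zc = zc
  rw [List.getD_cons_zero]

lemma apx_zero (d : ℕ) (t : ℝ) (i : Fin d) : apx d 0 t i = 0 := by
  unfold apx
  rw [cel_zero]
  simp [zc]

lemma psi_mem_Icc (hd2 : 2 ≤ d) (t : ℝ) (i : Fin d) : psi d t i ∈ Set.Icc (0:ℝ) 1 := by
  constructor
  · have := psi_ge hd2 0 t i
    rw [apx_zero] at this
    exact this
  · have := psi_le hd2 0 t i
    rw [apx_zero] at this
    simpa using this

lemma holder_bound (hd2 : 2 ≤ d) {s t : ℝ} (hs : s ∈ Set.Icc (0:ℝ) 1)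
    (ht : t ∈ Set.Icc (0:ℝ) 1) :
    ‖psiE d s - psiE d t‖ ≤ 2 * Real.sqrt ((d:ℝ) + 3) * |s - t| ^ ((1:ℝ) / d) := by
  have hd0 : (d:ℝ) ≠ 0 := by
    simp only [ne_eq, Nat.cast_eq_zero]
    omega
  by_cases hst : s = t
  · subst hst
    rw [sub_self, norm_zero, sub_self, abs_zero, Real.zero_rpow (one_div_ne_zero hd0), mul_zero]
  · have hr0 : 0 < |s - t| := abs_pos.mpr (sub_ne_zero.mpr hst)
    have hr1 : |s - t| ≤ 1 := by
      rw [abs_le]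
      obtain ⟨hs1, hs2⟩ := hs
      obtain ⟨ht1, ht2⟩ := ht
      constructor <;> linarith
    have hlt1 : ((2:ℝ) ^ d)⁻¹ < 1 := by
      rw [inv_lt_one_iff₀]
      right
      exact one_lt_pow₀ (by norm_num : (1:ℝ) < 2) (by omega)
    have hex : ∃ m : ℕ, (((2:ℝ) ^ d)⁻¹) ^ m < |s - t| := exists_pow_lt_of_lt_one hr0 hlt1
    have hspec : (((2:ℝ) ^ d)⁻¹) ^ (Nat.find hex) < |s - t| := Nat.find_spec hex
    have hm0 : Nat.find hex ≠ 0 := by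
      intro h0
      rw [h0, pow_zero] at hspec
      linarith
    obtain ⟨n, hn⟩ : ∃ n, Nat.find hex = n + 1 := ⟨Nat.find hex - 1, by omega⟩
    have hmin : ¬ ((((2:ℝ) ^ d)⁻¹) ^ n < |s - t|) := Nat.find_min hex (by omega)
    push_neg at hmin
    have hpow : ∀ k : ℕ, (((2:ℝ) ^ d)⁻¹) ^ k = ((2:ℝ) ^ (d * k))⁻¹ := by
      intro k
      rw [inv_pow, ← pow_mul]
    have hkey := key_norm hd2 hs ht n (by rw [← hpow]; exact hmin)
    have h2 : ((2:ℝ) ^ n)⁻¹ = 2 * ((2:ℝ) ^ (n + 1))⁻¹ := by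
      rw [pow_succ]
      field_simp
    have hrp : ((2:ℝ) ^ (n + 1))⁻¹ ≤ |s - t| ^ ((1:ℝ) / d) := by
      rw [← pow_rpow_inv d (n + 1) (by omega)]
      apply Real.rpow_le_rpow (by positivity) ?_ (by positivity)
      rw [← hpow, ← hn]
      exact hspec.le
    calc ‖psiE d s - psiE d t‖ ≤ Real.sqrt ((d:ℝ) + 3) * ((2:ℝ) ^ n)⁻¹ := hkey
    _ = 2 * Real.sqrt ((d:ℝ) + 3) * ((2:ℝ) ^ (n + 1))⁻¹ := by rw [h2]; ring
    _ ≤ 2 * Real.sqrt ((d:ℝ) + 3) * |s - t| ^ ((1:ℝ) / d) := by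
        apply mul_le_mul_of_nonneg_left hrp (by positivity)

lemma psiE_cont (hd2 : 2 ≤ d) : ContinuousOn (psiE d) (Set.Icc (0:ℝ) 1) := by
  rw [Metric.continuousOn_iff]
  intro b hb ε hε
  set C : ℝ := 2 * Real.sqrt ((d:ℝ) + 3) with hC
  have hC0 : 0 ≤ C := by positivity
  have hC1 : 0 < C + 1 := by positivity
  refine ⟨min 1 ((ε / (C + 1)) ^ d), by positivity, ?_⟩
  intro a ha hab
  rw [dist_eq_norm]
  have h := holder_bound hd2 ha hb
  have h2 : |a - b| ≤ (ε / (C + 1)) ^ d := by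
    rw [Real.dist_eq] at hab
    exact (lt_of_lt_of_le hab (min_le_right _ _)).le
  have h1 : |a - b| ^ ((1:ℝ) / d) ≤ ε / (C + 1) := by
    calc |a - b| ^ ((1:ℝ) / d) ≤ ((ε / (C + 1)) ^ d) ^ ((1:ℝ) / d) :=
          Real.rpow_le_rpow (abs_nonneg _) h2 (by positivity)
    _ = ε / (C + 1) := by
        rw [← Real.rpow_natCast (ε / (C + 1)) d, ← Real.rpow_mul (by positivity)]
        have hexp : (d:ℝ) * ((1:ℝ) / d) = 1 := by
          field_simp
        rw [hexp, Real.rpow_one]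
  calc ‖psiE d a - psiE d b‖ ≤ C * |a - b| ^ ((1:ℝ) / d) := h
  _ ≤ C * (ε / (C + 1)) := mul_le_mul_of_nonneg_left h1 hC0
  _ < ε := by
      rw [mul_div_assoc']
      rw [div_lt_iff₀ hC1]
      nlinarith

lemma psiE_surj (hd2 : 2 ≤ d) (x : EuclideanSpace ℝ (Fin d))
    (hx : ∀ i, x i ∈ Set.Icc (0:ℝ) 1) :
    ∃ t ∈ Set.Icc (0:ℝ) 1, psiE d t = x := by
  have hK : IsCompact (psiE d '' Set.Icc 0 1) :=
    isCompact_Icc.image_of_continuousOn (psiE_cont hd2)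
  have hcl : IsClosed (psiE d '' Set.Icc 0 1) := hK.isClosed
  have hmem : x ∈ closure (psiE d '' Set.Icc 0 1) := by
    rw [Metric.mem_closure_iff]
    intro ε hε
    have hsd : (0:ℝ) < Real.sqrt d + 1 := by positivity
    obtain ⟨n, hn⟩ : ∃ n : ℕ, ((2:ℝ)⁻¹) ^ n < ε / (Real.sqrt d + 1) :=
      exists_pow_lt_of_lt_one (by positivity) (by norm_num)
    rw [inv_pow] at hn
    set w : Cell d := fun i => min ⌊(2:ℝ) ^ n * x i⌋₊ (2 ^ n - 1) with hw
    have hwlt : ∀ i, w i < 2 ^ n := fun i =>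
      lt_of_le_of_lt (min_le_right _ _)
        (Nat.sub_lt (Nat.pow_pos (by norm_num)) one_pos)
    have hwmem : w ∈ (lev n : List (Cell d)) := (lev_spec hd2 n).2.2.2 w hwlt
    obtain ⟨k, hk, hkw⟩ := List.getElem_of_mem hwmem
    have hklen : k < 2 ^ (d * n) := by rw [← (lev_spec hd2 n).1]; exact hk
    set t := (k : ℝ) / 2 ^ (d * n) with htdef
    have ht : t ∈ Set.Icc (0:ℝ) 1 := by
      constructor
      · positivity
      · rw [htdef, div_le_one (by positivity)]
        have : (k:ℝ) ≤ ((2 ^ (d * n) : ℕ) : ℝ) := by exact_mod_cast hklen.le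
        calc (k:ℝ) ≤ ((2 ^ (d * n) : ℕ) : ℝ) := this
        _ = 2 ^ (d * n) := by push_cast; ring
    have hidx : idx d n t = k := by
      unfold idx
      have hmul : (2:ℝ) ^ (d * n) * t = (k:ℝ) := by
        rw [htdef]
        field_simp
      rw [hmul, Nat.floor_natCast]
      omega
    have hcel : cel d n t = w := by
      unfold cel
      rw [hidx, List.getD_eq_getElem _ _ hk]
      exact hkw
    refine ⟨psiE d t, Set.mem_image_of_mem _ ht, ?_⟩
    rw [dist_eq_norm, EuclideanSpace.norm_eq]
    have hcoord : ∀ i, ‖(x - psiE d t) i‖ ≤ ((2:ℝ) ^ n)⁻¹ := by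
      intro i
      rw [PiLp.sub_apply, Real.norm_eq_abs]
      have hxi := hx i
      have hp2 : (0:ℝ) < 2 ^ n := by positivity
      have hlow : (w i : ℝ) / 2 ^ n ≤ x i ∧ x i ≤ (w i : ℝ) / 2 ^ n + ((2:ℝ) ^ n)⁻¹ := by
        have hfl : (⌊(2:ℝ) ^ n * x i⌋₊ : ℝ) ≤ 2 ^ n * x i :=
          Nat.floor_le (by nlinarith [hxi.1])
        have hfu : (2:ℝ) ^ n * x i < ⌊(2:ℝ) ^ n * x i⌋₊ + 1 := Nat.lt_floor_add_one _
        by_cases hcase : ⌊(2:ℝ) ^ n * x i⌋₊ ≤ 2 ^ n - 1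
        · have hwi : w i = ⌊(2:ℝ) ^ n * x i⌋₊ := by
            rw [hw]
            simp only
            omega
          rw [hwi]
          constructor
          · rw [div_le_iff₀ hp2]
            nlinarith
          · rw [div_add' _ _ _ (ne_of_gt hp2), le_div_iff₀ hp2]
            have hinv : ((2:ℝ) ^ n)⁻¹ * 2 ^ n = 1 := by field_simp
            nlinarith
        · push_neg at hcase
          have hge : 2 ^ n ≤ ⌊(2:ℝ) ^ n * x i⌋₊ := by omega
          have hwi : w i = 2 ^ n - 1 := by
            rw [hw]
            simp only
            omega
          have hcast : ((w i : ℕ) : ℝ) = 2 ^ n - 1 := by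
            rw [hwi, Nat.cast_sub Nat.one_le_two_pow]
            push_cast
            ring
          have hx1 : (1:ℝ) ≤ x i := by
            have h1 : ((2 ^ n : ℕ) : ℝ) ≤ (⌊(2:ℝ) ^ n * x i⌋₊ : ℝ) := by exact_mod_cast hge
            have h2 : ((2 ^ n : ℕ) : ℝ) = 2 ^ n := by push_cast; ring
            nlinarith
          rw [hcast]
          constructor
          · rw [div_le_iff₀ hp2]
            nlinarith [hxi.2]
          · have : x i = 1 := le_antisymm hxi.2 hx1
            rw [this]
            rw [div_add' _ _ _ (ne_of_gt hp2), le_div_iff₀ hp2]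
            have : ((2:ℝ) ^ n)⁻¹ * 2 ^ n = 1 := by field_simp
            nlinarith
      have hceli : (cel d n t i : ℝ) = (w i : ℝ) := by rw [hcel]
      have hpsi1 : (w i : ℝ) / 2 ^ n ≤ psi d t i := by
        have := psi_ge hd2 n t i
        unfold apx at this
        rw [hceli] at this
        exact this
      have hpsi2 : psi d t i ≤ (w i : ℝ) / 2 ^ n + ((2:ℝ) ^ n)⁻¹ := by
        have := psi_le hd2 n t i
        unfold apx at this
        rw [hceli] at this
        exact this
      have hpe : psiE d t i = psi d t i := rfl
      rw [abs_le, hpe]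
      constructor <;> [linarith [hlow.1, hpsi2]; linarith [hlow.2, hpsi1]]
    have hnn : (0:ℝ) ≤ ((2:ℝ) ^ n)⁻¹ := by positivity
    calc Real.sqrt (∑ i, ‖(x - psiE d t) i‖ ^ 2)
        ≤ Real.sqrt (∑ _i : Fin d, (((2:ℝ) ^ n)⁻¹) ^ 2) := by
          apply Real.sqrt_le_sqrt
          exact Finset.sum_le_sum (fun i _ => pow_le_pow_left₀ (norm_nonneg _) (hcoord i) 2)
    _ = Real.sqrt ((d:ℝ) * (((2:ℝ) ^ n)⁻¹) ^ 2) := by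
          rw [Finset.sum_const, Finset.card_univ, Fintype.card_fin, nsmul_eq_mul]
    _ = Real.sqrt d * ((2:ℝ) ^ n)⁻¹ := by
          rw [Real.sqrt_mul (by positivity), Real.sqrt_sq hnn]
    _ < ε := by
          have hs0 : (0:ℝ) ≤ Real.sqrt d := Real.sqrt_nonneg _
          have hltε : (Real.sqrt d + 1) * ((2:ℝ) ^ n)⁻¹ < ε := by
            rw [← lt_div_iff₀' hsd] at *
            exact hn
          nlinarith
  rw [hcl.closure_eq] at hmem
  obtain ⟨t, ht, hxt⟩ := hmem
  exact ⟨t, ht, hxt⟩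

end Fixedd

end SFC

open Set

noncomputable section

/-- Existence of a Hölder space-filling curve (Lemma B.2): for every `d ≥ 1`
there is a map `ψ_d : [0,1] → [0,1]^d` that is surjective onto the unit cube
`[0,1]^d` and Hölder continuous of order `1/d` with constant `2√(d+3)`. -/
theorem exists_holder_space_filling_curve (d : ℕ) (hd : 1 ≤ d) :
    ∃ ψ : ℝ → EuclideanSpace ℝ (Fin d),
      (∀ t ∈ Set.Icc (0 : ℝ) 1, ∀ i, ψ t i ∈ Set.Icc (0 : ℝ) 1) ∧
      (∀ x : EuclideanSpace ℝ (Fin d), (∀ i, x i ∈ Set.Icc (0 : ℝ) 1) →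
        ∃ t ∈ Set.Icc (0 : ℝ) 1, ψ t = x) ∧
      (∀ s ∈ Set.Icc (0 : ℝ) 1, ∀ t ∈ Set.Icc (0 : ℝ) 1,
        ‖ψ s - ψ t‖ ≤ 2 * Real.sqrt ((d : ℝ) + 3) * |s - t| ^ (1 / (d : ℝ))) := by
  rcases eq_or_lt_of_le hd with h1 | h2
  · -- d = 1
    obtain rfl : d = 1 := h1.symm
    refine ⟨fun t => (WithLp.toLp 2 (fun _ => t) : EuclideanSpace ℝ (Fin 1)), ?_, ?_, ?_⟩
    · intro t ht i
      exact ht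
    · intro x hx
      refine ⟨x 0, hx 0, ?_⟩
      ext i
      show x 0 = x i
      rw [Subsingleton.elim 0 i]
    · intro s hs t ht
      have h4 : Real.sqrt ((1:ℕ) + 3) = 2 := by
        rw [show ((1:ℕ):ℝ) + 3 = 2 ^ 2 by norm_num]
        exact Real.sqrt_sq (by norm_num)
      have hexp : (1:ℝ) / ((1:ℕ):ℝ) = 1 := by norm_num
      rw [h4, hexp, Real.rpow_one]
      refine le_trans (le_of_eq (EuclideanSpace.norm_eq _)) ?_
      rw [Fin.sum_univ_one]
      simp only [PiLp.sub_apply]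
      rw [Real.norm_eq_abs, sq_abs, Real.sqrt_sq_eq_abs]
      have := abs_nonneg (s - t)
      linarith
  · -- 2 ≤ d
    have hd2 : 2 ≤ d := h2
    refine ⟨SFC.psiE d, ?_, ?_, ?_⟩
    · intro t _ i
      exact SFC.psi_mem_Icc hd2 t i
    · intro x hx
      exact SFC.psiE_surj hd2 x hx
    · intro s hs t ht
      exact SFC.holder_bound hd2 hs ht

end
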